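/- The period-six sequence F defined by F(0) = 1 and, for n ≥ 1, F(n) = (2 if 2 divides n else 1)·(3 if 3 divides n else 1) — i.e. the sequence 1, 2, 3, 2, 1, 6, 1, 2, 3, 2, 1, 6, … — is cobweb-admissible: for all 0 ≤ k ≤ n, (∏_{i=1}^{k} F(i))·(∏_{i=1}^{n-k} F(i)) divides ∏_{i=1}^{n} F(i). -/

import Mathlib

lemma period_six_prod_eq (m : ℕ) :
    (∏ i ∈ Finset.Icc 1 m, (if 2 ∣ i then 2 else 1) * (if 3 ∣ i then 3 else 1))
      = 2 ^ (m / 2) * 3 ^ (m / 3) := by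
  induction m with
  | zero => simp
  | succ m ih =>
    rw [Finset.prod_Icc_succ_top (by omega), ih, Nat.succ_div, Nat.succ_div]
    by_cases h2 : 2 ∣ m + 1 <;> by_cases h3 : 3 ∣ m + 1 <;>
      simp [h2, h3, pow_succ] <;> ring

/-- The period-six sequence `1, 2, 3, 2, 1, 6, 1, 2, 3, 2, 1, 6, …` given for `n ≥ 1` by
`F n = (2 if 2 ∣ n else 1)·(3 if 3 ∣ n else 1)` is cobweb-admissible. -/
theorem period_six_seq_cobweb_admissible :
    ∀ n k : ℕ, k ≤ n →
      (∏ i ∈ Finset.Icc 1 k, (if 2 ∣ i then 2 else 1) * (if 3 ∣ i then 3 else 1))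
          * (∏ i ∈ Finset.Icc 1 (n - k),
              (if 2 ∣ i then 2 else 1) * (if 3 ∣ i then 3 else 1)) ∣
        ∏ i ∈ Finset.Icc 1 n, (if 2 ∣ i then 2 else 1) * (if 3 ∣ i then 3 else 1) := by
  intro n k hk
  rw [period_six_prod_eq, period_six_prod_eq, period_six_prod_eq]
  have h2 : k / 2 + (n - k) / 2 ≤ n / 2 := by
    have := Nat.add_div_le_add_div k (n - k) 2
    rwa [Nat.add_sub_cancel' hk] at this
  have h3 : k / 3 + (n - k) / 3 ≤ n / 3 := by
    have := Nat.add_div_le_add_div k (n - k) 3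
    rwa [Nat.add_sub_cancel' hk] at this
  calc 2 ^ (k / 2) * 3 ^ (k / 3) * (2 ^ ((n - k) / 2) * 3 ^ ((n - k) / 3))
      = 2 ^ (k / 2 + (n - k) / 2) * 3 ^ (k / 3 + (n - k) / 3) := by
        rw [pow_add, pow_add]; ring
    _ ∣ 2 ^ (n / 2) * 3 ^ (n / 3) :=
        mul_dvd_mul (pow_dvd_pow 2 h2) (pow_dvd_pow 3 h3)
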